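/- Let E be a field of characteristic 0 containing elements ℏ and j with j² = ℏ and j ≠ 0. In M₂(E) set e = E₁₂, f = E₂₁, h = E₁₁ − E₂₂, and let X₀ ∈ GL(2, E) be the matrix with rows (1, 1) and (j, −j). Then, in M₂(E) ⊗_E M₂(E), j·(Ad_{X₀} ⊗ Ad_{X₀})(e ⊗ f + (1/4)·h ⊗ h) = (j/2)·(e ⊗ f + f ⊗ e + (1/2)·h ⊗ h) + (1/4)·(h ⊗ e − e ⊗ h) + (ℏ/4)·(f ⊗ h − h ⊗ f). -/

import Mathlib

open scoped TensorProduct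

noncomputable section

/-- Conjugation `a ↦ X a X⁻¹` as a linear endomorphism of `Mₙ(F)`. -/
def conjLin (F : Type*) [Field F] {n : ℕ} (X : Matrix (Fin n) (Fin n) F) :
    Matrix (Fin n) (Fin n) F →ₗ[F] Matrix (Fin n) (Fin n) F :=
  (LinearMap.mulLeft F X).comp (LinearMap.mulRight F X⁻¹)

/-- The operator `Ad_X ⊗ Ad_X : a ⊗ b ↦ (X a X⁻¹) ⊗ (X b X⁻¹)` on
`Mₙ(F) ⊗_F Mₙ(F)`. -/
def AdT (F : Type*) [Field F] {n : ℕ} (X : Matrix (Fin n) (Fin n) F) :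
    (Matrix (Fin n) (Fin n) F ⊗[F] Matrix (Fin n) (Fin n) F) →ₗ[F]
      (Matrix (Fin n) (Fin n) F ⊗[F] Matrix (Fin n) (Fin n) F) :=
  TensorProduct.map (conjLin F X) (conjLin F X)

/-- `e = E₁₂` in `M₂(E)`. -/
def eM (E : Type*) [Field E] : Matrix (Fin 2) (Fin 2) E :=
  Matrix.single 0 1 1

/-- `f = E₂₁` in `M₂(E)`. -/
def fM (E : Type*) [Field E] : Matrix (Fin 2) (Fin 2) E :=
  Matrix.single 1 0 1

/-- `h = E₁₁ − E₂₂` in `M₂(E)`. -/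
def hM (E : Type*) [Field E] : Matrix (Fin 2) (Fin 2) E :=
  Matrix.single 0 0 1 - Matrix.single 1 1 1


section Aux
variable (E : Type*) [Field E] [CharZero E] (j : E) (hj0 : j ≠ 0)

lemma X0_inv (j : E) (hj0 : j ≠ 0) :
    (!![1, 1; j, -j] : Matrix (Fin 2) (Fin 2) E)⁻¹
      = !![1/2, (2*j)⁻¹; 1/2, -(2*j)⁻¹] := by
  apply Matrix.inv_eq_right_inv
  ext i k
  fin_cases i <;> fin_cases k <;>
    simp [Matrix.mul_apply, Fin.sum_univ_two] <;> field_simp <;> ring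

lemma conj_e (j : E) (hj0 : j ≠ 0) :
    conjLin E (!![1, 1; j, -j]) (eM E)
      = (-(2*j)⁻¹) • eM E + (j/2) • fM E + (1/2 : E) • hM E := by
  have h := X0_inv E j hj0
  ext i k
  fin_cases i <;> fin_cases k <;>
    simp [conjLin, h, eM, fM, hM, Matrix.mul_apply, Fin.sum_univ_two,
      Matrix.single] <;> field_simp <;> ring

lemma conj_f (j : E) (hj0 : j ≠ 0) :
    conjLin E (!![1, 1; j, -j]) (fM E)
      = ((2*j)⁻¹) • eM E + (-(j/2)) • fM E + (1/2 : E) • hM E := by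
  have h := X0_inv E j hj0
  ext i k
  fin_cases i <;> fin_cases k <;>
    simp [conjLin, h, eM, fM, hM, Matrix.mul_apply, Fin.sum_univ_two,
      Matrix.single] <;> field_simp <;> ring

lemma conj_h (j : E) (hj0 : j ≠ 0) :
    conjLin E (!![1, 1; j, -j]) (hM E)
      = (j⁻¹) • eM E + j • fM E := by
  have h := X0_inv E j hj0
  ext i k
  fin_cases i <;> fin_cases k <;>
    simp [conjLin, h, eM, fM, hM, Matrix.mul_apply, Fin.sum_univ_two,
      Matrix.single] <;> field_simp <;> ring

end Aux

/-- With `X₀ = [[1, 1], [j, −j]]` and `j² = ℏ`, one has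
`j·(Ad_{X₀} ⊗ Ad_{X₀})(e ⊗ f + (1/4)·h ⊗ h)
  = (j/2)·Ω + (1/4)·(h ⊗ e − e ⊗ h) + (ℏ/4)·(f ⊗ h − h ⊗ f)`,
where `Ω = e ⊗ f + f ⊗ e + (1/2)·h ⊗ h` is the Casimir element of `sl(2)`. -/
theorem statement16 (E : Type*) [Field E] [CharZero E] (hbar j : E)
    (hj : j ^ 2 = hbar) (hj0 : j ≠ 0) :
    j • AdT E (!![1, 1; j, -j])
        (eM E ⊗ₜ[E] fM E + (4⁻¹ : E) • (hM E ⊗ₜ[E] hM E))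
      = (j / 2) • (eM E ⊗ₜ[E] fM E + fM E ⊗ₜ[E] eM E
            + (2⁻¹ : E) • (hM E ⊗ₜ[E] hM E))
        + (4⁻¹ : E) • (hM E ⊗ₜ[E] eM E - eM E ⊗ₜ[E] hM E)
        + (hbar / 4) • (fM E ⊗ₜ[E] hM E - hM E ⊗ₜ[E] fM E) := by
  subst hj
  rw [show (!![1, 1; j, -j] : Matrix (Fin 2) (Fin 2) E) = !![1,1;j,-j] from rfl]
  simp only [AdT, map_add, map_smul, TensorProduct.map_tmul,
    conj_e E j hj0, conj_f E j hj0, conj_h E j hj0]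
  simp only [TensorProduct.add_tmul, TensorProduct.tmul_add,
    TensorProduct.smul_tmul', TensorProduct.tmul_smul, smul_add, smul_smul,
    smul_sub]
  simp only [← TensorProduct.smul_tmul', TensorProduct.tmul_smul, smul_smul]
  match_scalars <;> field_simp <;> ring
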